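/- Let m_1, m_2, m_3 > 0 and let u ∈ ℝ be arbitrary (representing the value U'(−1/2) of the derivative of the potential). Then there exist θ_1, θ_2, θ_3 ∈ ℝ with θ_1 − θ_2 = 2π/3 and θ_2 − θ_3 = 2π/3, and ω ∈ ℝ, such that (ω²/2) m_k sin(2θ_k) = Σ_{j≠k} m_k m_j sin(θ_k − θ_j) · u for k = 1,2,3. That is, for any three masses the equilateral triangle shape θ_1 − θ_2 = θ_2 − θ_3 = θ_3 − θ_1 = 2π/3 (mod 2π) generates a relative equilibrium on a rotating meridian (a fixed point with ω = 0 when the masses are equal). -/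

import Mathlib

open Real

/-- For any three positive masses, the equilateral triangle shape
`θ_1 − θ_2 = θ_2 − θ_3 = 2π/3` generates a relative equilibrium on a
rotating meridian. -/
theorem equilateral_ERE_exists
    (m1 m2 m3 : ℝ) (hm1 : 0 < m1) (hm2 : 0 < m2) (hm3 : 0 < m3) (u : ℝ) :
    ∃ θ1 θ2 θ3 ω : ℝ, θ1 - θ2 = 2 * Real.pi / 3 ∧ θ2 - θ3 = 2 * Real.pi / 3 ∧
      (ω ^ 2 / 2 * (m1 * Real.sin (2 * θ1))
        = m1 * m2 * Real.sin (θ1 - θ2) * u + m1 * m3 * Real.sin (θ1 - θ3) * u) ∧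
      (ω ^ 2 / 2 * (m2 * Real.sin (2 * θ2))
        = m2 * m1 * Real.sin (θ2 - θ1) * u + m2 * m3 * Real.sin (θ2 - θ3) * u) ∧
      (ω ^ 2 / 2 * (m3 * Real.sin (2 * θ3))
        = m3 * m1 * Real.sin (θ3 - θ1) * u + m3 * m2 * Real.sin (θ3 - θ2) * u) := by
  have h3 : (0:ℝ) < Real.sqrt 3 := Real.sqrt_pos.mpr (by norm_num)
  have s3 : Real.sin (2 * Real.pi / 3) = Real.sqrt 3 / 2 := by
    have e : 2 * Real.pi / 3 = Real.pi - Real.pi / 3 := by ring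
    rw [e, Real.sin_pi_sub, Real.sin_pi_div_three]
  have c3 : Real.cos (2 * Real.pi / 3) = -(1/2) := by
    have e : 2 * Real.pi / 3 = Real.pi - Real.pi / 3 := by ring
    rw [e, Real.cos_pi_sub, Real.cos_pi_div_three]
  have s4 : Real.sin (4 * Real.pi / 3) = -(Real.sqrt 3 / 2) := by
    have e : 4 * Real.pi / 3 = Real.pi + Real.pi / 3 := by ring
    rw [e, Real.sin_add, Real.sin_pi, Real.cos_pi, Real.sin_pi_div_three]; ring
  have c4 : Real.cos (4 * Real.pi / 3) = -(1/2) := by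
    have e : 4 * Real.pi / 3 = Real.pi + Real.pi / 3 := by ring
    rw [e, Real.cos_add, Real.sin_pi, Real.cos_pi, Real.cos_pi_div_three]; ring
  set a := Real.sqrt 3 / 2 * u * (m3 - m1) with ha
  set b := Real.sqrt 3 / 2 * u * (m2 - m3) with hb
  set c := -(2 * b + a) / Real.sqrt 3 with hc
  have hc' : Real.sqrt 3 * c = -(2 * b + a) := by
    rw [hc]; field_simp
  clear_value a b c
  set z : ℂ := ⟨c, a⟩ with hz
  set lam := ‖z‖ with hlam
  have hsin : lam * Real.sin z.arg = a := by
    by_cases h : z = 0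
    · have ha0 : a = 0 := by
        have := congrArg Complex.im h; simpa [hz] using this
      rw [hlam, h, ha0]; simp
    · rw [Complex.sin_arg]
      field_simp [norm_ne_zero_iff.mpr h]
      rfl
  have hcos : lam * Real.cos z.arg = c := by
    by_cases h : z = 0
    · have hc0 : c = 0 := by
        have := congrArg Complex.re h; simpa [hz] using this
      rw [hlam, h, hc0]; simp
    · rw [Complex.cos_arg h]
      field_simp [norm_ne_zero_iff.mpr h]
      rfl
  have homega : (Real.sqrt (2 * lam)) ^ 2 = 2 * lam :=
    Real.sq_sqrt (by positivity)
  refine ⟨z.arg / 2 + 2 * Real.pi / 3, z.arg / 2, z.arg / 2 - 2 * Real.pi / 3,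
    Real.sqrt (2 * lam), by ring, by ring, ?_, ?_, ?_⟩
  · have e1 : 2 * (z.arg / 2 + 2 * Real.pi / 3) = z.arg + 4 * Real.pi / 3 := by ring
    have e2 : z.arg / 2 + 2 * Real.pi / 3 - z.arg / 2 = 2 * Real.pi / 3 := by ring
    have e3 : z.arg / 2 + 2 * Real.pi / 3 - (z.arg / 2 - 2 * Real.pi / 3)
        = 4 * Real.pi / 3 := by ring
    rw [e1, e2, e3, homega, Real.sin_add, s4, c4, s3]
    have hrhs : m1 * m2 * (Real.sqrt 3 / 2) * u + m1 * m3 * -(Real.sqrt 3 / 2) * u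
        = m1 * b := by rw [hb]; ring
    rw [hrhs]
    linear_combination (m1 * -(1/2)) * hsin + (m1 * -(Real.sqrt 3 / 2)) * hcos
      - (m1 / 2) * hc'
  · have e1 : 2 * (z.arg / 2) = z.arg := by ring
    have e2 : z.arg / 2 - (z.arg / 2 + 2 * Real.pi / 3) = -(2 * Real.pi / 3) := by ring
    have e3 : z.arg / 2 - (z.arg / 2 - 2 * Real.pi / 3) = 2 * Real.pi / 3 := by ring
    rw [e1, e2, e3, homega, Real.sin_neg, s3]
    have hrhs : m2 * m1 * -(Real.sqrt 3 / 2) * u + m2 * m3 * (Real.sqrt 3 / 2) * u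
        = m2 * a := by rw [ha]; ring
    rw [hrhs]
    linear_combination m2 * hsin
  · have e1 : 2 * (z.arg / 2 - 2 * Real.pi / 3) = z.arg - 4 * Real.pi / 3 := by ring
    have e2 : z.arg / 2 - 2 * Real.pi / 3 - (z.arg / 2 + 2 * Real.pi / 3)
        = -(4 * Real.pi / 3) := by ring
    have e3 : z.arg / 2 - 2 * Real.pi / 3 - z.arg / 2 = -(2 * Real.pi / 3) := by ring
    rw [e1, e2, e3, homega, Real.sin_sub, Real.sin_neg, Real.sin_neg, s4, c4, s3]
    have hrhs : m3 * m1 * -(-(Real.sqrt 3 / 2)) * u + m3 * m2 * -(Real.sqrt 3 / 2) * u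
        = m3 * (-a - b) := by rw [ha, hb]; ring
    rw [hrhs]
    linear_combination (m3 * -(1/2)) * hsin + (m3 * (Real.sqrt 3 / 2)) * hcos
      + (m3 / 2) * hc'
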